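/- arXiv:2405.01014 — 2 statements merged into one kernel-verified Lean document; each statement's English description precedes it below -/
import Mathlib

section
/- Let m ≥ 1 be an integer, let p_1, …, p_m ∈ (0, 1], and let X_1, …, X_m be independent random variables such that X_i is geometrically distributed on {1, 2, 3, …} with success probability p_i, i.e., Pr[X_i = j] = (1 − p_i)^{j−1}·p_i for all j ≥ 1. Let Y = X_1 + ⋯ + X_m. Then for every real r ≥ 1, Pr[Y ≥ r·E[Y]] ≤ r·e^{1−r}. -/
open MeasureTheory
open scoped ENNReal

noncomputable section

lemma geom_exp_one_sub (t : ℝ) : Real.exp t * (1 - t) ≤ 1 := by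
  have h1 := Real.add_one_le_exp (-t)
  have h2 : Real.exp (-t) * Real.exp t = 1 := by
    rw [← Real.exp_add]; simp
  nlinarith [Real.exp_pos t]

lemma geom_lintegral_exp {Ω : Type*} [MeasurableSpace Ω] (μ : Measure Ω) [IsProbabilityMeasure μ]
    (p t : ℝ) (hp0 : 0 < p) (hp1 : p ≤ 1) (ht0 : 0 ≤ t) (htp : t < p)
    (X : Ω → ℕ) (hX : Measurable X)
    (hgeom : ∀ j : ℕ, 1 ≤ j → μ {ω | X ω = j} = ENNReal.ofReal ((1 - p) ^ (j - 1) * p)) :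
    ∫⁻ ω, ENNReal.ofReal (Real.exp (t * (X ω : ℝ))) ∂μ
      = ENNReal.ofReal (Real.exp t * p / (1 - Real.exp t * (1 - p))) := by
  set A := Real.exp t * (1 - p) with hA
  have hA0 : 0 ≤ A := mul_nonneg (Real.exp_pos t).le (by linarith)
  have hA1 : A < 1 := by
    have h1 := geom_exp_one_sub t
    nlinarith [Real.exp_pos t]
  -- the fibers
  have hfib : ∀ n : ℕ, (μ.map X) {n} = μ {ω | X ω = n} := by
    intro n
    rw [Measure.map_apply hX (measurableSet_singleton n)]
    rfl
  have hsum : μ {ω | X ω = 0} + ∑' k : ℕ, μ {ω | X ω = (k + 1)} = 1 := by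
    rw [← tsum_eq_zero_add' (f := fun j : ℕ => μ {ω | X ω = j}) ENNReal.summable]
    have hU : (⋃ j : ℕ, {ω | X ω = j}) = Set.univ := by
      ext ω; simp
    have hdisj : Pairwise (Function.onFun Disjoint fun j : ℕ => {ω | X ω = j}) := by
      intro i j hij
      simp only [Function.onFun, Set.disjoint_left]
      intro ω h1 h2
      exact hij (h1.symm.trans h2)
    have hmu := measure_iUnion (μ := μ) (f := fun j : ℕ => {ω | X ω = j}) hdisj
      (fun j => hX (measurableSet_singleton j))
    rw [hU, measure_univ] at hmu
    exact hmu.symm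
  have htail : ∑' k : ℕ, μ {ω | X ω = (k + 1)} = 1 := by
    have hsummable : Summable (fun k : ℕ => (1 - p) ^ k * p) :=
      (summable_geometric_of_lt_one (by linarith) (by linarith)).mul_right p
    calc ∑' k : ℕ, μ {ω | X ω = (k + 1)}
        = ∑' k : ℕ, ENNReal.ofReal ((1 - p) ^ k * p) := by
          refine tsum_congr fun k => ?_
          rw [hgeom (k + 1) (by omega)]
          simp
      _ = ENNReal.ofReal (∑' k : ℕ, (1 - p) ^ k * p) :=
          (ENNReal.ofReal_tsum_of_nonneg
            (fun k => mul_nonneg (pow_nonneg (by linarith) _) hp0.le) hsummable).symm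
      _ = 1 := by
          rw [tsum_mul_right, tsum_geometric_of_lt_one (by linarith) (by linarith)]
          have h1 : 1 - (1 - p) = p := by ring
          rw [h1, inv_mul_cancel₀ hp0.ne', ENNReal.ofReal_one]
  have hzero : μ {ω | X ω = 0} = 0 := by
    rw [htail] at hsum
    have h1 : (1 : ℝ≥0∞) + μ {ω | X ω = 0} = 1 + 0 := by
      rw [add_zero, add_comm]; exact hsum
    exact (ENNReal.add_right_inj ENNReal.one_ne_top).mp h1
  have hmg : Measurable fun n : ℕ => ENNReal.ofReal (Real.exp (t * (n : ℝ))) :=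
    measurable_from_top
  calc ∫⁻ ω, ENNReal.ofReal (Real.exp (t * (X ω : ℝ))) ∂μ
      = ∫⁻ n, ENNReal.ofReal (Real.exp (t * (n : ℝ))) ∂(μ.map X) := (lintegral_map hmg hX).symm
    _ = ∑' n : ℕ, ENNReal.ofReal (Real.exp (t * (n : ℝ))) * (μ.map X) {n} :=
        lintegral_countable' _
    _ = ∑' n : ℕ, ENNReal.ofReal (Real.exp (t * (n : ℝ))) * μ {ω | X ω = n} := by
        simp_rw [hfib]
    _ = ENNReal.ofReal (Real.exp (t * ((0 : ℕ) : ℝ))) * μ {ω | X ω = 0}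
        + ∑' k : ℕ, ENNReal.ofReal (Real.exp (t * ((k + 1 : ℕ) : ℝ))) * μ {ω | X ω = (k + 1)} :=
        tsum_eq_zero_add' ENNReal.summable
    _ = ∑' k : ℕ, ENNReal.ofReal (Real.exp t * p * A ^ k) := by
        rw [hzero, mul_zero, zero_add]
        refine tsum_congr fun k => ?_
        rw [hgeom (k + 1) (by omega), ← ENNReal.ofReal_mul (Real.exp_pos _).le]
        congr 1
        have he : Real.exp (t * ((k + 1 : ℕ) : ℝ)) = Real.exp t ^ (k + 1) := by
          rw [← Real.exp_nat_mul]
          congr 1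
          push_cast
          ring
        rw [he]
        simp only [Nat.add_sub_cancel]
        rw [pow_succ, hA, mul_pow]
        ring
    _ = ENNReal.ofReal (Real.exp t * p / (1 - A)) := by
        rw [← ENNReal.ofReal_tsum_of_nonneg
          (fun k => mul_nonneg (mul_nonneg (Real.exp_pos t).le hp0.le) (pow_nonneg hA0 k))
          (((summable_geometric_of_lt_one hA0 hA1).mul_left _))]
        rw [tsum_mul_left, tsum_geometric_of_lt_one hA0 hA1, div_eq_mul_inv]

lemma mgf_val_le (p t : ℝ) (hp0 : 0 < p) (hp1 : p ≤ 1) (ht0 : 0 ≤ t) (htp : t < p) :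
    Real.exp t * p / (1 - Real.exp t * (1 - p)) ≤ (1 - t / p)⁻¹ := by
  have h1 := geom_exp_one_sub t
  have hA1 : Real.exp t * (1 - p) < 1 := by nlinarith [Real.exp_pos t]
  have hd : 0 < 1 - Real.exp t * (1 - p) := by linarith
  have h3 : (1 - t / p)⁻¹ = p / (p - t) := by
    rw [one_sub_div hp0.ne', inv_div]
  rw [h3, div_le_div_iff₀ hd (by linarith : (0:ℝ) < p - t)]
  nlinarith [mul_nonneg hp0.le (sub_nonneg.mpr (geom_exp_one_sub t)), Real.exp_pos t]

lemma key_rpow_ineq (r : ℝ) (hr : 1 ≤ r) (pm pi : ℝ) (hpm : 0 < pm) (hpi : pm ≤ pi) :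
    (1 - pm * (1 - 1 / r) / pi)⁻¹ ≤ Real.exp (pm / pi * Real.log r) := by
  have hr0 : (0:ℝ) < r := by linarith
  have hpi0 : (0:ℝ) < pi := lt_of_lt_of_le hpm hpi
  set s := pm / pi with hs
  have hs0 : 0 < s := div_pos hpm hpi0
  have hs1 : s ≤ 1 := (div_le_one hpi0).mpr hpi
  set x := pm * (1 - 1 / r) / pi with hx
  have hxs : x = s * (1 - 1 / r) := by rw [hx, hs]; ring
  have h1r0 : 0 ≤ 1 - 1 / r := by
    have : 1 / r ≤ 1 := by rw [div_le_one hr0]; exact hr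
    linarith
  have h1r1 : 1 - 1 / r < 1 := by
    have : 0 < 1 / r := by positivity
    linarith
  have hx0 : 0 ≤ x := by rw [hxs]; positivity
  have hx1 : x < 1 := by
    rw [hxs]
    calc s * (1 - 1 / r) ≤ 1 * (1 - 1 / r) := mul_le_mul_of_nonneg_right hs1 h1r0
      _ < 1 := by linarith
  have hber : 1 / r ≤ (1 - x) ^ ((1:ℝ) / s) := by
    have hb := one_add_mul_self_le_rpow_one_add (s := -x) (by linarith)
      (p := 1 / s) (one_le_one_div hs0 hs1)
    have hxd : 1 / s * x = 1 - 1 / r := by rw [hxs]; field_simp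
    have : 1 + 1 / s * -x = 1 / r := by rw [mul_neg, hxd]; ring
    rw [this] at hb
    rwa [← sub_eq_add_neg] at hb
  have h2 : ((1:ℝ) / r) ^ s ≤ 1 - x := by
    have hmono := Real.rpow_le_rpow (by positivity) hber hs0.le
    rwa [← Real.rpow_mul (by linarith : (0:ℝ) ≤ 1 - x),
      one_div_mul_cancel hs0.ne', Real.rpow_one] at hmono
  have hrs : Real.exp (s * Real.log r) = r ^ s := by
    rw [Real.rpow_def_of_pos hr0, mul_comm]
  have h4 : ((1:ℝ) / r) ^ s = (r ^ s)⁻¹ := by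
    rw [one_div, Real.inv_rpow hr0.le]
  have hrpos : (0:ℝ) < r ^ s := Real.rpow_pos_of_pos hr0 s
  rw [hrs, ← inv_inv (r ^ s)]
  rw [h4] at h2
  exact inv_anti₀ (by positivity) h2


/-- If `X_1, …, X_m` are independent geometric random variables on
`{1, 2, …}` with success probabilities `p_1, …, p_m ∈ (0, 1]` and `Y = X_1 + ⋯ + X_m`
(so `E[Y] = ∑ 1/p_i`), then for every `r ≥ 1`, `Pr[Y ≥ r·E[Y]] ≤ r·e^{1−r}`. -/
theorem sum_of_geometrics_tail
    {Ω : Type*} [MeasurableSpace Ω] (μ : Measure Ω) [IsProbabilityMeasure μ]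
    (m : ℕ) (hm : 1 ≤ m)
    (p : Fin m → ℝ) (hp0 : ∀ i, 0 < p i) (hp1 : ∀ i, p i ≤ 1)
    (X : Fin m → Ω → ℕ)
    (hmeas : ∀ i, Measurable (X i))
    (hindep : ProbabilityTheory.iIndepFun X μ)
    (hgeom : ∀ i, ∀ j : ℕ, 1 ≤ j →
      μ {ω | X i ω = j} = ENNReal.ofReal ((1 - p i) ^ (j - 1) * p i)) :
    ∀ r : ℝ, 1 ≤ r →
      μ {ω | r * (∑ i, 1 / p i) ≤ ((∑ i, X i ω : ℕ) : ℝ)}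
        ≤ ENNReal.ofReal (r * Real.exp (1 - r)) := by

  intro r hr
  have hne : Nonempty (Fin m) := ⟨⟨0, hm⟩⟩
  have hr0 : (0:ℝ) < r := by linarith
  set pm := Finset.univ.inf' Finset.univ_nonempty p with hpm_def
  obtain ⟨i0, -, hi0⟩ := Finset.exists_mem_eq_inf' Finset.univ_nonempty p
  have hpm0 : 0 < pm := by rw [hpm_def, hi0]; exact hp0 i0
  have hpm_le : ∀ i, pm ≤ p i := fun i => Finset.inf'_le p (Finset.mem_univ i)
  set M := ∑ i, 1 / p i with hM_def
  have hM1 : 1 ≤ pm * M := by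
    rw [hM_def, Finset.mul_sum]
    have hsingle := Finset.single_le_sum (f := fun i => pm * (1 / p i))
      (fun i _ => by have := hp0 i; positivity) (Finset.mem_univ i0)
    calc (1:ℝ) = pm * (1 / p i0) := by
          rw [hpm_def, hi0, mul_one_div, div_self (hp0 i0).ne']
      _ ≤ _ := hsingle
  have h1r0 : 0 ≤ 1 - 1 / r := by
    have : 1 / r ≤ 1 := by rw [div_le_one hr0]; exact hr
    linarith
  set t := pm * (1 - 1 / r) with ht_def
  have ht0 : 0 ≤ t := by rw [ht_def]; positivity
  have htpm : t < pm := by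
    rw [ht_def]
    have h2 : 0 < 1 / r := by positivity
    nlinarith
  have htp : ∀ i, t < p i := fun i => lt_of_lt_of_le htpm (hpm_le i)
  set X' : Fin m → Ω → ℝ := fun i ω => (X i ω : ℝ) with hX'
  have hmeas' : ∀ i, Measurable (X' i) := fun i => measurable_from_top.comp (hmeas i)
  have hindep' : ProbabilityTheory.iIndepFun X' μ :=
    hindep.comp (fun _ => (Nat.cast : ℕ → ℝ)) (fun _ => measurable_from_top)
  have hdpos : ∀ i, 0 < 1 - Real.exp t * (1 - p i) := by
    intro i
    have h1 := geom_exp_one_sub t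
    have := htp i
    have := hp0 i
    nlinarith [Real.exp_pos t]
  have hlint : ∀ i, ∫⁻ ω, ENNReal.ofReal (Real.exp (t * X' i ω)) ∂μ
      = ENNReal.ofReal (Real.exp t * p i / (1 - Real.exp t * (1 - p i))) :=
    fun i => geom_lintegral_exp μ (p i) t (hp0 i) (hp1 i) ht0 (htp i) (X i) (hmeas i) (hgeom i)
  have hint : ∀ i, Integrable (fun ω => Real.exp (t * X' i ω)) μ := by
    intro i
    refine ⟨(((hmeas' i).const_mul t).exp).aestronglyMeasurable, ?_⟩
    rw [HasFiniteIntegral]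
    have hnn : ∀ ω, ‖Real.exp (t * X' i ω)‖ₑ
        = ENNReal.ofReal (Real.exp (t * X' i ω)) := fun ω =>
      Real.enorm_eq_ofReal (Real.exp_pos _).le
    simp_rw [hnn, hlint i]
    exact ENNReal.ofReal_lt_top
  have hmgf : ∀ i, ProbabilityTheory.mgf (X' i) μ t ≤ (1 - t / p i)⁻¹ := by
    intro i
    have hcalc : ProbabilityTheory.mgf (X' i) μ t
        = (∫⁻ ω, ENNReal.ofReal (Real.exp (t * X' i ω)) ∂μ).toReal := by
      rw [ProbabilityTheory.mgf, integral_eq_lintegral_of_nonneg_ae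
        (Filter.Eventually.of_forall fun ω => (Real.exp_pos _).le)
        (((hmeas' i).const_mul t).exp).aestronglyMeasurable]
    rw [hcalc, hlint i, ENNReal.toReal_ofReal
      (div_nonneg (mul_nonneg (Real.exp_pos t).le (hp0 i).le) (hdpos i).le)]
    exact mgf_val_le (p i) t (hp0 i) (hp1 i) ht0 (htp i)
  have hintsum : Integrable (fun ω => Real.exp (t * (∑ i, X' i) ω)) μ :=
    hindep'.integrable_exp_mul_sum hmeas' (fun i _ => hint i)
  have hch := ProbabilityTheory.measure_ge_le_exp_mul_mgf (μ := μ) (X := ∑ i, X' i)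
    (r * M) ht0 hintsum
  rw [hindep'.mgf_sum hmeas'] at hch
  have hinv_pos : ∀ i, (0:ℝ) ≤ (1 - t / p i)⁻¹ := by
    intro i
    have : t / p i < 1 := (div_lt_one (hp0 i)).mpr (htp i)
    have h2 : 0 < 1 - t / p i := by linarith
    positivity
  have hprod : ∏ i, ProbabilityTheory.mgf (X' i) μ t ≤ ∏ i, (1 - t / p i)⁻¹ :=
    Finset.prod_le_prod (fun i _ => ProbabilityTheory.mgf_nonneg) (fun i _ => hmgf i)
  have hprod2 : ∏ i, (1 - t / p i)⁻¹ ≤ Real.exp (∑ i, pm / p i * Real.log r) := by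
    rw [Real.exp_sum]
    exact Finset.prod_le_prod (fun i _ => hinv_pos i)
      (fun i _ => key_rpow_ineq r hr pm (p i) hpm0 (hpm_le i))
  have hsum_eq : ∑ i, pm / p i * Real.log r = pm * M * Real.log r := by
    rw [hM_def, Finset.mul_sum, Finset.sum_mul]
    exact Finset.sum_congr rfl fun i _ => by ring
  have hfinal : Real.exp (-t * (r * M)) * Real.exp (pm * M * Real.log r)
      ≤ r * Real.exp (1 - r) := by
    rw [← Real.exp_add]
    have hexp_eq : -t * (r * M) + pm * M * Real.log r
        = pm * M * (Real.log r - (r - 1)) := by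
      rw [ht_def]
      field_simp
      ring
    rw [hexp_eq]
    have hlog : Real.log r - (r - 1) ≤ 0 := by
      have := Real.log_le_sub_one_of_pos hr0
      linarith
    have h5 : pm * M * (Real.log r - (r - 1)) ≤ 1 * (Real.log r - (r - 1)) :=
      mul_le_mul_of_nonpos_right hM1 hlog
    calc Real.exp (pm * M * (Real.log r - (r - 1)))
        ≤ Real.exp (Real.log r + (1 - r)) := Real.exp_le_exp.mpr (by linarith)
      _ = r * Real.exp (1 - r) := by rw [Real.exp_add, Real.exp_log hr0]
  have hset : {ω | r * M ≤ ((∑ i, X i ω : ℕ) : ℝ)} = {ω | r * M ≤ (∑ i, X' i) ω} := by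
    ext ω
    simp [hX', Finset.sum_apply]
  have hchain : (μ {ω | r * M ≤ (∑ i, X' i) ω}).toReal ≤ r * Real.exp (1 - r) := by
    refine le_trans hch (le_trans ?_ hfinal)
    have he : (0:ℝ) ≤ Real.exp (-t * (r * M)) := (Real.exp_pos _).le
    calc Real.exp (-t * (r * M)) * ∏ i, ProbabilityTheory.mgf (X' i) μ t
        ≤ Real.exp (-t * (r * M)) * Real.exp (∑ i, pm / p i * Real.log r) :=
          mul_le_mul_of_nonneg_left (le_trans hprod hprod2) he
      _ = Real.exp (-t * (r * M)) * Real.exp (pm * M * Real.log r) := by rw [hsum_eq]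
  rw [hset]
  calc μ {ω | r * M ≤ (∑ i, X' i) ω}
      = ENNReal.ofReal ((μ {ω | r * M ≤ (∑ i, X' i) ω}).toReal) :=
        (ENNReal.ofReal_toReal (measure_ne_top μ _)).symm
    _ ≤ ENNReal.ofReal (r * Real.exp (1 - r)) := ENNReal.ofReal_le_ofReal hchain


end
end

section
/- Let n ∈ ℕ, let p ∈ (0, 1], and let X_0, …, X_n be ℕ-valued random variables on a common probability space (not necessarily independent) such that for every u ∈ [0..n] and every t ∈ ℕ it holds that Pr[X_u > t] ≤ (1 − p)^t. Then E[max_{u ∈ [0..n]} X_u] ≤ (ln(n + 1) + 2)/p. -/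
open MeasureTheory
open scoped ENNReal

noncomputable section

set_option maxHeartbeats 1000000

private lemma layercake_le_aux {Ω : Type*} [MeasurableSpace Ω] (μ : Measure Ω) (f : Ω → ℕ) :
    ∫⁻ ω, (f ω : ℝ≥0∞) ∂μ ≤ ∑' t : ℕ, μ {ω | t < f ω} := by
  choose A hsub hmeas hmu using fun t : ℕ => exists_measurable_superset μ {ω | t < f ω}
  have hfg : ∀ ω, (f ω : ℝ≥0∞) ≤ ∑' t : ℕ, (A t).indicator (fun _ => (1 : ℝ≥0∞)) ω := by
    intro ω
    have h1 : (f ω : ℝ≥0∞) = ∑' t : ℕ, ({ω' | t < f ω'}).indicator (fun _ => (1 : ℝ≥0∞)) ω := by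
      rw [tsum_eq_sum (s := Finset.range (f ω)) (by
        intro t ht
        simp only [Finset.mem_range, not_lt] at ht
        simp [Set.indicator_apply, Nat.not_lt.mpr ht])]
      simp [Set.indicator_apply]
      rw [Finset.filter_true_of_mem fun x hx => Finset.mem_range.mp hx, Finset.card_range]
    rw [h1]
    exact ENNReal.tsum_le_tsum fun t =>
      Set.indicator_le_indicator_of_subset (hsub t) (fun _ => zero_le) ω
  calc ∫⁻ ω, (f ω : ℝ≥0∞) ∂μ
      ≤ ∫⁻ ω, ∑' t : ℕ, (A t).indicator (fun _ => (1 : ℝ≥0∞)) ω ∂μ := lintegral_mono hfg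
    _ = ∑' t : ℕ, ∫⁻ ω, (A t).indicator (fun _ => (1 : ℝ≥0∞)) ω ∂μ :=
        lintegral_tsum fun t => (measurable_const.indicator (hmeas t)).aemeasurable
    _ = ∑' t : ℕ, μ (A t) := by
        simp [lintegral_indicator, hmeas]
    _ = ∑' t : ℕ, μ {ω | t < f ω} := by simp [hmu]

/-- If `X_0, …, X_n` are ℕ-valued random variables (not necessarily
independent) with geometrically decaying tails `Pr[X_u > t] ≤ (1 − p)^t` for all `t ∈ ℕ`,
where `p ∈ (0, 1]`, then `E[max_u X_u] ≤ (ln(n + 1) + 2)/p`. -/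
theorem expected_max_of_geometric_tails
    {Ω : Type*} [MeasurableSpace Ω] (μ : Measure Ω) [IsProbabilityMeasure μ]
    (n : ℕ) (p : ℝ) (hp0 : 0 < p) (hp1 : p ≤ 1)
    (X : Fin (n + 1) → Ω → ℕ)
    (htail : ∀ u : Fin (n + 1), ∀ t : ℕ,
      μ {ω | t < X u ω} ≤ ENNReal.ofReal ((1 - p) ^ t)) :
    ∫⁻ ω, ((Finset.univ.sup fun u => X u ω : ℕ) : ℝ≥0∞) ∂μ
      ≤ ENNReal.ofReal ((Real.log ((n : ℝ) + 1) + 2) / p) := by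
  set q : ℝ := 1 - p with hq
  have hq0 : 0 ≤ q := by simp [hq]; linarith
  have hq1 : q < 1 := by simp [hq]; linarith
  set M : Ω → ℕ := fun ω => Finset.univ.sup fun u => X u ω with hM
  have hMtail : ∀ t : ℕ, μ {ω | t < M ω} ≤ ((n : ℝ≥0∞) + 1) * ENNReal.ofReal (q ^ t) := by
    intro t
    have hset : {ω | t < M ω} = ⋃ u : Fin (n + 1), {ω | t < X u ω} := by
      ext ω; simp [hM, Finset.lt_sup_iff]
    calc μ {ω | t < M ω} ≤ ∑' u : Fin (n + 1), μ {ω | t < X u ω} := by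
          rw [hset]; exact measure_iUnion_le _
      _ ≤ ∑' _u : Fin (n + 1), ENNReal.ofReal (q ^ t) :=
          ENNReal.tsum_le_tsum fun u => htail u t
      _ = ((n : ℝ≥0∞) + 1) * ENNReal.ofReal (q ^ t) := by
          rw [tsum_fintype]
          simp [Finset.sum_const, Finset.card_univ, nsmul_eq_mul]
  have hM1 : ∀ t : ℕ, μ {ω | t < M ω} ≤ 1 := fun t => prob_le_one
  set T : ℕ := ⌈Real.log ((n : ℝ) + 1) / p⌉₊ with hT
  have hlognn : 0 ≤ Real.log ((n : ℝ) + 1) := by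
    apply Real.log_nonneg; push_cast; linarith [Nat.cast_nonneg (α := ℝ) n]
  have hsub : (1 : ℝ≥0∞) - ENNReal.ofReal q = ENNReal.ofReal p := by
    rw [← ENNReal.ofReal_one, ← ENNReal.ofReal_sub _ hq0]
    congr 1; simp [hq]
  have hsum : ∑' t : ℕ, μ {ω | t < M ω}
      ≤ (T : ℝ≥0∞) + ((n : ℝ≥0∞) + 1) * ENNReal.ofReal (q ^ T) * (ENNReal.ofReal p)⁻¹ := by
    rw [← Summable.sum_add_tsum_nat_add' (f := fun t => μ {ω | t < M ω}) (k := T) ENNReal.summable]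
    apply add_le_add
    · calc ∑ t ∈ Finset.range T, μ {ω | t < M ω} ≤ ∑ _t ∈ Finset.range T, 1 :=
            Finset.sum_le_sum fun t _ => hM1 t
        _ = (T : ℝ≥0∞) := by simp
    · calc ∑' t : ℕ, μ {ω | t + T < M ω}
          ≤ ∑' t : ℕ, ((n : ℝ≥0∞) + 1) * ENNReal.ofReal (q ^ (t + T)) :=
            ENNReal.tsum_le_tsum fun t => hMtail (t + T)
        _ = ((n : ℝ≥0∞) + 1) * ENNReal.ofReal (q ^ T) * ∑' t : ℕ, (ENNReal.ofReal q) ^ t := by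
            rw [← ENNReal.tsum_mul_left]
            congr 1; ext t
            rw [ENNReal.ofReal_pow hq0, pow_add, ENNReal.ofReal_pow hq0]
            ring
        _ = ((n : ℝ≥0∞) + 1) * ENNReal.ofReal (q ^ T) * (ENNReal.ofReal p)⁻¹ := by
            rw [ENNReal.tsum_geometric, hsub]
  have hpT : Real.log ((n : ℝ) + 1) ≤ p * T := by
    have h1 : Real.log ((n : ℝ) + 1) / p ≤ (T : ℝ) := Nat.le_ceil _
    rw [div_le_iff₀ hp0] at h1; linarith
  have hqT : q ^ T ≤ 1 / ((n : ℝ) + 1) := by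
    have hnp : (0 : ℝ) < (n : ℝ) + 1 := by positivity
    have h1 : q ≤ Real.exp (-p) := by
      have := Real.add_one_le_exp (-p); linarith
    calc q ^ T ≤ Real.exp (-p) ^ T := pow_le_pow_left₀ hq0 h1 T
      _ = Real.exp (-(p * T)) := by
          rw [← Real.exp_nat_mul]; ring_nf
      _ ≤ Real.exp (-(Real.log ((n : ℝ) + 1))) := Real.exp_le_exp.mpr (by linarith)
      _ = 1 / ((n : ℝ) + 1) := by
          rw [Real.exp_neg, Real.exp_log hnp, one_div]
  have hcast : ((n : ℝ≥0∞) + 1) = ENNReal.ofReal ((n : ℝ) + 1) := by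
    rw [ENNReal.ofReal_add (by positivity) zero_le_one, ENNReal.ofReal_one,
      ENNReal.ofReal_natCast]
  calc ∫⁻ ω, ((M ω : ℕ) : ℝ≥0∞) ∂μ ≤ ∑' t : ℕ, μ {ω | t < M ω} := layercake_le_aux μ M
    _ ≤ (T : ℝ≥0∞) + ((n : ℝ≥0∞) + 1) * ENNReal.ofReal (q ^ T) * (ENNReal.ofReal p)⁻¹ := hsum
    _ ≤ ENNReal.ofReal (Real.log ((n : ℝ) + 1) / p + 1 / p) + ENNReal.ofReal (1 / p) := by
        apply add_le_add
        · rw [← ENNReal.ofReal_natCast]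
          apply ENNReal.ofReal_le_ofReal
          have h1 : (T : ℝ) < Real.log ((n : ℝ) + 1) / p + 1 :=
            Nat.ceil_lt_add_one (by positivity)
          have h2 : (1 : ℝ) ≤ 1 / p := by
            rw [le_div_iff₀ hp0]; linarith
          linarith
        · have hle1 : ((n : ℝ≥0∞) + 1) * ENNReal.ofReal (q ^ T) ≤ 1 := by
            rw [hcast, ← ENNReal.ofReal_mul (by positivity), ← ENNReal.ofReal_one]
            apply ENNReal.ofReal_le_ofReal
            have hnp : (0 : ℝ) < (n : ℝ) + 1 := by positivity
            calc ((n : ℝ) + 1) * q ^ T ≤ ((n : ℝ) + 1) * (1 / ((n : ℝ) + 1)) := by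
                  apply mul_le_mul_of_nonneg_left hqT (le_of_lt hnp)
              _ = 1 := by field_simp
          calc ((n : ℝ≥0∞) + 1) * ENNReal.ofReal (q ^ T) * (ENNReal.ofReal p)⁻¹
              ≤ 1 * (ENNReal.ofReal p)⁻¹ := mul_le_mul_left hle1 _
            _ = (ENNReal.ofReal p)⁻¹ := one_mul _
            _ = ENNReal.ofReal p⁻¹ := (ENNReal.ofReal_inv_of_pos hp0).symm
            _ = ENNReal.ofReal (1 / p) := by rw [one_div]
    _ = ENNReal.ofReal ((Real.log ((n : ℝ) + 1) + 2) / p) := by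
        rw [← ENNReal.ofReal_add (by positivity) (by positivity)]
        congr 1; field_simp; ring

end
end
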